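/- Let X be a complex Hilbert space, G : ℝ → B(X) a continuously differentiable family of bounded self-adjoint operators, and H : ℝ → B(X) a continuous family of bounded self-adjoint operators. Suppose U : ℝ → B(X) is differentiable and solves ∂_t U(t) = −i H(t) U(t). Then Ũ(t) := e^{−i G(t)} U(t) is differentiable and solves ∂_t Ũ(t) = −i H'(t) Ũ(t), where H'(t) = e^{−i G(t)} H(t) e^{i G(t)} + ∫₀¹ e^{−i s G(t)} (∂_t G)(t) e^{i s G(t)} ds. -/

import Mathlib

set_option maxHeartbeats 1000000
set_option synthInstance.maxHeartbeats 200000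
set_option linter.unusedSectionVars false
set_option linter.unusedVariables false

open MeasureTheory intervalIntegral

section Aux
open NormedSpace Asymptotics
variable {𝔸 : Type*} [NormedRing 𝔸] [NormedAlgebra ℝ 𝔸] [CompleteSpace 𝔸] [NormOneClass 𝔸]

theorem myNormExp (x : 𝔸) : ‖exp x‖ ≤ Real.exp ‖x‖ := by
  have hs : Summable fun n => ‖(Nat.factorial n : ℝ)⁻¹ • x ^ n‖ :=
    NormedSpace.norm_expSeries_summable' (𝕂 := ℝ) x
  have hs2 : Summable fun n : ℕ => (Nat.factorial n : ℝ)⁻¹ • ‖x‖ ^ n :=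
    NormedSpace.expSeries_summable' (𝕂 := ℝ) ‖x‖
  rw [exp_eq_tsum ℝ, Real.exp_eq_exp_ℝ, exp_eq_tsum ℝ]
  refine (norm_tsum_le_tsum_norm hs).trans (Summable.tsum_le_tsum (fun n => ?_) hs hs2)
  rw [norm_smul, norm_inv, Real.norm_natCast, smul_eq_mul]
  gcongr
  exact norm_pow_le _ _

theorem expContAux (B : 𝔸) : Continuous fun s : ℝ => exp (s • B) :=
  (differentiable_exp_smul_const ℝ B).continuous

theorem expContAux' (B : 𝔸) : Continuous fun s : ℝ => exp ((1 - s) • B) :=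
  (differentiable_exp_smul_const ℝ B).continuous.comp (continuous_const.sub continuous_id)

theorem myDuhamelId (A B : 𝔸) :
    exp B - exp A = ∫ s in (0:ℝ)..1, exp (s • B) * (B - A) * exp ((1 - s) • A) := by
  have key : ∀ s : ℝ, HasDerivAt (fun u : ℝ => exp (u • B) * exp ((1 - u) • A))
      (exp (s • B) * (B - A) * exp ((1 - s) • A)) s := by
    intro s
    have h1 : HasDerivAt (fun u : ℝ => exp (u • B)) (exp (s • B) * B) s :=
      hasDerivAt_exp_smul_const B s
    have h2 : HasDerivAt (fun u : ℝ => exp ((1 - u) • A))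
        (-(A * exp ((1 - s) • A))) s := by
      have hinner : HasDerivAt (fun u : ℝ => 1 - u) (-1 : ℝ) s := by
        simpa using (hasDerivAt_id s).const_sub 1
      have := (hasDerivAt_exp_smul_const' (𝕂 := ℝ) A (1 - s)).scomp s hinner
      simpa [Function.comp_def] using this
    have := h1.mul h2
    convert this using 1
    · rfl
    simp only [sub_eq_add_neg, add_mul, neg_mul, mul_add, mul_neg, mul_assoc]
  have hcont : Continuous fun s : ℝ => exp (s • B) * (B - A) * exp ((1 - s) • A) :=
    ((expContAux B).mul continuous_const).mul (expContAux' A)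
  have := intervalIntegral.integral_eq_sub_of_hasDerivAt (fun s _ => key s)
    (hcont.intervalIntegrable 0 1)
  rw [this]
  simp [exp_zero]

theorem myExpLip (A B : 𝔸) :
    ‖exp B - exp A‖ ≤ ‖B - A‖ * (Real.exp ‖B‖ * Real.exp ‖A‖) := by
  rw [myDuhamelId]
  have := intervalIntegral.norm_integral_le_of_norm_le_const
    (C := ‖B - A‖ * (Real.exp ‖B‖ * Real.exp ‖A‖))
    (f := fun s => exp (s • B) * (B - A) * exp ((1 - s) • A)) (a := (0:ℝ)) (b := 1) ?_
  · simpa using this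
  · intro s hs
    rw [Set.uIoc_of_le (by norm_num : (0:ℝ) ≤ 1)] at hs
    have hs0 : 0 ≤ s := le_of_lt hs.1
    have hs1 : s ≤ 1 := hs.2
    calc ‖exp (s • B) * (B - A) * exp ((1 - s) • A)‖
        ≤ ‖exp (s • B)‖ * ‖B - A‖ * ‖exp ((1 - s) • A)‖ := by
          exact (norm_mul_le _ _).trans (by gcongr; exact norm_mul_le _ _)
      _ ≤ Real.exp ‖B‖ * ‖B - A‖ * Real.exp ‖A‖ := by
          gcongr
          · exact (myNormExp _).trans (by
              apply Real.exp_le_exp.2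
              rw [norm_smul, Real.norm_eq_abs, abs_of_nonneg hs0]
              nlinarith [norm_nonneg B])
          · exact (myNormExp _).trans (by
              apply Real.exp_le_exp.2
              rw [norm_smul, Real.norm_eq_abs, abs_of_nonneg (by linarith : (0:ℝ) ≤ 1 - s)]
              nlinarith [norm_nonneg A])
      _ = ‖B - A‖ * (Real.exp ‖B‖ * Real.exp ‖A‖) := by ring

theorem myDuhamelDeriv {A : ℝ → 𝔸} {A' : 𝔸} {t : ℝ} (h : HasDerivAt A A' t) :
    HasDerivAt (fun u => exp (A u))
      (∫ s in (0:ℝ)..1, exp (s • A t) * A' * exp ((1 - s) • A t)) t := by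
  set D : 𝔸 := ∫ s in (0:ℝ)..1, exp (s • A t) * A' * exp ((1 - s) • A t) with hD
  rw [hasDerivAt_iff_isLittleO]
  set E1 : ℝ → 𝔸 := fun u => ∫ s in (0:ℝ)..1,
    (exp (s • A u) - exp (s • A t)) * (A u - A t) * exp ((1 - s) • A t) with hE1
  set E2 : ℝ → 𝔸 := fun u => ∫ s in (0:ℝ)..1,
    exp (s • A t) * (A u - A t - (u - t) • A') * exp ((1 - s) • A t) with hE2
  -- decomposition
  have hdecomp : ∀ u, exp (A u) - exp (A t) - (u - t) • D = E1 u + E2 u := by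
    intro u
    have ig1 : IntervalIntegrable (fun s : ℝ =>
        (exp (s • A u) - exp (s • A t)) * (A u - A t) * exp ((1 - s) • A t))
        volume 0 1 :=
      ((((expContAux (A u)).sub (expContAux (A t))).mul continuous_const).mul
        (expContAux' (A t))).intervalIntegrable 0 1
    have ig2 : IntervalIntegrable (fun s : ℝ =>
        exp (s • A t) * (A u - A t - (u - t) • A') * exp ((1 - s) • A t)) volume 0 1 :=
      (((expContAux (A t)).mul continuous_const).mul (expContAux' (A t))).intervalIntegrable 0 1
    have hsum : E1 u + E2 u = ∫ s in (0:ℝ)..1,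
        ((exp (s • A u) - exp (s • A t)) * (A u - A t) * exp ((1 - s) • A t)
          + exp (s • A t) * (A u - A t - (u - t) • A') * exp ((1 - s) • A t)) :=
      (intervalIntegral.integral_add ig1 ig2).symm
    have hptwise : ∀ s : ℝ,
        (exp (s • A u) - exp (s • A t)) * (A u - A t) * exp ((1 - s) • A t)
          + exp (s • A t) * (A u - A t - (u - t) • A') * exp ((1 - s) • A t)
        = exp (s • A u) * (A u - A t) * exp ((1 - s) • A t)
          - (u - t) • (exp (s • A t) * A' * exp ((1 - s) • A t)) := by
      intro s
      simp only [sub_mul, mul_sub, smul_mul_assoc, mul_smul_comm]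
      abel
    have ig3 : IntervalIntegrable (fun s : ℝ =>
        exp (s • A u) * (A u - A t) * exp ((1 - s) • A t)) volume 0 1 :=
      (((expContAux (A u)).mul continuous_const).mul (expContAux' (A t))).intervalIntegrable 0 1
    have ig4 : IntervalIntegrable (fun s : ℝ =>
        (u - t) • (exp (s • A t) * A' * exp ((1 - s) • A t))) volume 0 1 :=
      ((((expContAux (A t)).mul continuous_const).mul
        (expContAux' (A t))).const_smul _).intervalIntegrable 0 1
    rw [hsum]
    rw [intervalIntegral.integral_congr (g := fun s : ℝ =>
        exp (s • A u) * (A u - A t) * exp ((1 - s) • A t)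
          - (u - t) • (exp (s • A t) * A' * exp ((1 - s) • A t)))
      (fun s _ => hptwise s)]
    rw [intervalIntegral.integral_sub ig3 ig4, intervalIntegral.integral_smul,
      ← myDuhamelId (A t) (A u), ← hD]
  -- E2 is little-o
  have hE2o : E2 =o[nhds t] fun u => u - t := by
    have hbound : ∀ u, ‖E2 u‖ ≤
        (Real.exp ‖A t‖ * Real.exp ‖A t‖) * ‖A u - A t - (u - t) • A'‖ := by
      intro u
      have := intervalIntegral.norm_integral_le_of_norm_le_const
        (C := Real.exp ‖A t‖ * Real.exp ‖A t‖ * ‖A u - A t - (u - t) • A'‖)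
        (f := fun s : ℝ => exp (s • A t) * (A u - A t - (u - t) • A') *
          exp ((1 - s) • A t)) (a := (0:ℝ)) (b := 1) ?_
      · simpa using this
      · intro s hs
        rw [Set.uIoc_of_le (by norm_num : (0:ℝ) ≤ 1)] at hs
        have hs0 : 0 ≤ s := le_of_lt hs.1
        have hs1 : s ≤ 1 := hs.2
        calc ‖exp (s • A t) * (A u - A t - (u - t) • A') * exp ((1 - s) • A t)‖
            ≤ ‖exp (s • A t)‖ * ‖A u - A t - (u - t) • A'‖ * ‖exp ((1 - s) • A t)‖ :=
              (norm_mul_le _ _).trans (by gcongr; exact norm_mul_le _ _)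
          _ ≤ Real.exp ‖A t‖ * ‖A u - A t - (u - t) • A'‖ * Real.exp ‖A t‖ := by
              gcongr
              · exact (myNormExp _).trans (Real.exp_le_exp.2 (by
                  rw [norm_smul, Real.norm_eq_abs, abs_of_nonneg hs0]
                  nlinarith [norm_nonneg (A t)]))
              · exact (myNormExp _).trans (Real.exp_le_exp.2 (by
                  rw [norm_smul, Real.norm_eq_abs, abs_of_nonneg (by linarith : (0:ℝ) ≤ 1 - s)]
                  nlinarith [norm_nonneg (A t)]))
          _ = Real.exp ‖A t‖ * Real.exp ‖A t‖ * ‖A u - A t - (u - t) • A'‖ := by ring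
    have hO : E2 =O[nhds t] fun u => A u - A t - (u - t) • A' :=
      IsBigO.of_bound _ (Filter.Eventually.of_forall fun u => by
        simpa using hbound u)
    exact hO.trans_isLittleO (hasDerivAt_iff_isLittleO.mp h)
  -- E1 is little-o
  have hE1o : E1 =o[nhds t] fun u => u - t := by
    have hAcont : Filter.Tendsto A (nhds t) (nhds (A t)) := h.continuousAt
    have hev : ∀ᶠ u in nhds t, ‖A u‖ ≤ ‖A t‖ + 1 := by
      have : ∀ᶠ u in nhds t, A u ∈ Metric.closedBall (A t) 1 :=
        hAcont (Metric.closedBall_mem_nhds _ one_pos)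
      filter_upwards [this] with u hu
      have h1 := mem_closedBall_iff_norm.mp hu
      have h2 := norm_add_le (A u - A t) (A t)
      rw [sub_add_cancel] at h2
      linarith
    set C : ℝ := Real.exp (‖A t‖ + 1) * Real.exp ‖A t‖ * Real.exp ‖A t‖ with hC
    have hbound : ∀ᶠ u in nhds t, ‖E1 u‖ ≤ C * (‖A u - A t‖ * ‖A u - A t‖) := by
      filter_upwards [hev] with u hu
      have := intervalIntegral.norm_integral_le_of_norm_le_const
        (C := C * (‖A u - A t‖ * ‖A u - A t‖))
        (f := fun s : ℝ => (exp (s • A u) - exp (s • A t)) * (A u - A t) *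
          exp ((1 - s) • A t)) (a := (0:ℝ)) (b := 1) ?_
      · simpa using this
      · intro s hs
        rw [Set.uIoc_of_le (by norm_num : (0:ℝ) ≤ 1)] at hs
        have hs0 : 0 ≤ s := le_of_lt hs.1
        have hs1 : s ≤ 1 := hs.2
        have hdiff : ‖exp (s • A u) - exp (s • A t)‖ ≤
            ‖A u - A t‖ * (Real.exp (‖A t‖ + 1) * Real.exp ‖A t‖) := by
          refine (myExpLip (s • A t) (s • A u)).trans ?_
          have h1 : ‖s • A u - s • A t‖ ≤ ‖A u - A t‖ := by
            rw [← smul_sub, norm_smul, Real.norm_eq_abs, abs_of_nonneg hs0]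
            nlinarith [norm_nonneg (A u - A t)]
          have h2 : Real.exp ‖s • A u‖ ≤ Real.exp (‖A t‖ + 1) := Real.exp_le_exp.2 (by
            rw [norm_smul, Real.norm_eq_abs, abs_of_nonneg hs0]
            nlinarith [norm_nonneg (A u)])
          have h3 : Real.exp ‖s • A t‖ ≤ Real.exp ‖A t‖ := Real.exp_le_exp.2 (by
            rw [norm_smul, Real.norm_eq_abs, abs_of_nonneg hs0]
            nlinarith [norm_nonneg (A t)])
          have := mul_le_mul h2 h3 (Real.exp_nonneg _) (Real.exp_nonneg _)
          exact mul_le_mul h1 this (by positivity) (norm_nonneg _)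
        calc ‖(exp (s • A u) - exp (s • A t)) * (A u - A t) * exp ((1 - s) • A t)‖
            ≤ ‖exp (s • A u) - exp (s • A t)‖ * ‖A u - A t‖ * ‖exp ((1 - s) • A t)‖ :=
              (norm_mul_le _ _).trans (by gcongr; exact norm_mul_le _ _)
          _ ≤ (‖A u - A t‖ * (Real.exp (‖A t‖ + 1) * Real.exp ‖A t‖)) * ‖A u - A t‖ *
                Real.exp ‖A t‖ := by
              gcongr
              exact (myNormExp _).trans (Real.exp_le_exp.2 (by
                rw [norm_smul, Real.norm_eq_abs, abs_of_nonneg (by linarith : (0:ℝ) ≤ 1 - s)]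
                nlinarith [norm_nonneg (A t)]))
          _ = C * (‖A u - A t‖ * ‖A u - A t‖) := by rw [hC]; ring
    have hO : E1 =O[nhds t] fun u => ‖A u - A t‖ * ‖A u - A t‖ := by
      refine isBigO_iff.mpr ⟨C, ?_⟩
      filter_upwards [hbound] with u hu
      simpa [abs_mul, abs_of_nonneg (norm_nonneg (A u - A t))] using hu
    have hsq : (fun u => ‖A u - A t‖ * ‖A u - A t‖) =o[nhds t] fun u => u - t := by
      have h1 : (fun u => ‖A u - A t‖) =o[nhds t] (fun _ => (1:ℝ)) := by
        rw [isLittleO_one_iff]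
        have : Filter.Tendsto (fun u => A u - A t) (nhds t) (nhds 0) := by
          simpa using hAcont.sub (tendsto_const_nhds (x := A t))
        simpa using this.norm
      have h2 : (fun u => ‖A u - A t‖) =O[nhds t] fun u => u - t :=
        (h.isBigO_sub).norm_left
      simpa using h1.mul_isBigO h2
    exact hO.trans_isLittleO hsq
  -- combine
  refine ((hE1o.add hE2o).congr' ?_ (Filter.Eventually.of_forall fun u => rfl))
  exact Filter.Eventually.of_forall fun u => (hdecomp u).symm

end Aux

section Main
open NormedSpace Asymptotics

/-- Conjugation of a quantum dynamics by a time-dependent unitary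
`e^{-iG(t)}`: if `∂_t U = -i H U` then `Ũ(t) = e^{-iG(t)} U(t)` solves `∂_t Ũ = -i H' Ũ` with
`H'(t) = e^{-iG(t)} H(t) e^{iG(t)} + ∫₀¹ e^{-isG(t)} (∂_t G)(t) e^{isG(t)} ds`. -/
theorem stmt6 {X : Type*} [NormedAddCommGroup X] [InnerProductSpace ℂ X] [CompleteSpace X]
    (G : ℝ → (X →L[ℂ] X)) (hG : ContDiff ℝ 1 G) (hGsa : ∀ t, IsSelfAdjoint (G t))
    (H : ℝ → (X →L[ℂ] X)) (hH : Continuous H) (hHsa : ∀ t, IsSelfAdjoint (H t))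
    (U : ℝ → (X →L[ℂ] X))
    (hU : ∀ t, HasDerivAt U ((-Complex.I) • (H t ∘L U t)) t) (t : ℝ) :
    HasDerivAt (fun s => NormedSpace.exp ((-Complex.I) • G s) ∘L U s)
      ((-Complex.I) •
        (((NormedSpace.exp ((-Complex.I) • G t) ∘L H t ∘L NormedSpace.exp (Complex.I • G t))
          + ∫ s in (0:ℝ)..1,
              NormedSpace.exp ((-(s : ℂ) * Complex.I) • G t) ∘L (deriv G t) ∘L
                NormedSpace.exp (((s : ℂ) * Complex.I) • G t))
          ∘L (NormedSpace.exp ((-Complex.I) • G t) ∘L U t))) t := by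
  rcases subsingleton_or_nontrivial X with hX | hX
  · haveI : Subsingleton (X →L[ℂ] X) := inferInstance
    exact ((hasDerivAt_const t (0 : X →L[ℂ] X)).congr_of_eventuallyEq
      (Filter.Eventually.of_forall fun _ => Subsingleton.elim _ _)).congr_deriv (Subsingleton.elim _ _)
  haveI : NormOneClass (X →L[ℂ] X) := inferInstance
  have hexp : (NormedSpace.exp : (X →L[ℂ] X) → (X →L[ℂ] X)) = exp := rfl
  have hGd : HasDerivAt G (deriv G t) t := ((hG.differentiable one_ne_zero) t).hasDerivAt
  set G' : X →L[ℂ] X := deriv G t with hG'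
  have hA : HasDerivAt (fun u => (-Complex.I) • G u) ((-Complex.I) • G') t := hGd.const_smul (-Complex.I)
  have hEd := myDuhamelDeriv hA
  have hprod := hEd.mul (hU t)
  simp only [hexp, ← ContinuousLinearMap.mul_def]
  convert hprod using 1
  case e'_4 => rfl
  case e'_5 => rfl
  case e'_6 => rfl
  case e'_8 => rfl
  -- now: pure algebra
  set E : X →L[ℂ] X := exp ((-Complex.I) • G t) with hE
  set F : X →L[ℂ] X := exp (Complex.I • G t) with hF
  have hsmul1 : ∀ s : ℝ, s • ((-Complex.I) • G t) = (-(s : ℂ) * Complex.I) • G t := by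
    intro s
    rw [← smul_assoc]
    congr 1
    simp [Complex.real_smul]
  have hFE : F * E = 1 := by
    let +nondep : NormedAlgebra ℚ (X →L[ℂ] X) := .restrictScalars ℚ ℂ (X →L[ℂ] X)
    rw [hE, hF, ← exp_add_of_commute (((Commute.refl (G t)).smul_left _).smul_right _)]
    rw [← add_smul]
    simp [exp_zero]
  have hsmul2 : ∀ s : ℝ, exp ((1 - s) • ((-Complex.I) • G t))
      = exp (((s : ℂ) * Complex.I) • G t) * E := by
    intro s
    let +nondep : NormedAlgebra ℚ (X →L[ℂ] X) := .restrictScalars ℚ ℂ (X →L[ℂ] X)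
    rw [hE, ← exp_add_of_commute (((Commute.refl (G t)).smul_left _).smul_right _)]
    congr 1
    rw [← smul_assoc, ← add_smul]
    congr 1
    simp [Complex.real_smul]
    ring
  set J : X →L[ℂ] X := ∫ s in (0:ℝ)..1,
    exp ((-(s:ℂ) * Complex.I) • G t) * (G' * exp (((s:ℂ) * Complex.I) • G t)) with hJ
  have hJcont : Continuous fun s : ℝ =>
      exp ((-(s:ℂ) * Complex.I) • G t) * (G' * exp (((s:ℂ) * Complex.I) • G t)) := by
    have c1 : Continuous fun s : ℝ => exp ((-(s:ℂ) * Complex.I) • G t) := by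
      have := (expContAux ((-Complex.I) • G t))
      simp only [hsmul1] at this
      exact this
    have c2 : Continuous fun s : ℝ => exp (((s:ℂ) * Complex.I) • G t) :=
      (differentiable_exp_smul_const ℂ (G t)).continuous.comp
        (Complex.continuous_ofReal.mul continuous_const)
    exact c1.mul (continuous_const.mul c2)
  have hDJ : (∫ s in (0:ℝ)..1, exp (s • ((-Complex.I) • G t)) * ((-Complex.I) • G') *
      exp ((1 - s) • ((-Complex.I) • G t))) = (-Complex.I) • (J * E) := by
    have h1 : ∀ s : ℝ, exp (s • ((-Complex.I) • G t)) * ((-Complex.I) • G') *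
        exp ((1 - s) • ((-Complex.I) • G t))
        = (-Complex.I) • ((exp ((-(s:ℂ) * Complex.I) • G t) *
            (G' * exp (((s:ℂ) * Complex.I) • G t))) * E) := by
      intro s
      rw [hsmul1, hsmul2]
      simp only [mul_smul_comm, smul_mul_assoc, mul_assoc]
    rw [intervalIntegral.integral_congr (fun s _ => h1 s), intervalIntegral.integral_smul]
    congr 1
    rw [hJ]
    have hL := (ContinuousLinearMap.mul ℝ (X →L[ℂ] X)).flip E |>.intervalIntegral_comp_comm
      (hJcont.intervalIntegrable 0 1 (μ := volume))
    simpa using hL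
  rw [hDJ]
  simp only [← ContinuousLinearMap.mul_def]
  have e1 : (-Complex.I) • (E * (H t * F) * (E * U t)) = E * ((-Complex.I) • (H t * U t)) := by
    have h2 : E * (H t * F) * (E * U t) = E * (H t * ((F * E) * U t)) := by
      simp only [mul_assoc]
    rw [h2, hFE, one_mul]
    simp only [mul_smul_comm, mul_assoc]
  have e2 : (-Complex.I) • (J * E) * U t = (-Complex.I) • (J * (E * U t)) := by
    simp only [smul_mul_assoc, mul_assoc]
  rw [e2, ← e1, add_comm, add_mul, smul_add]

end Main
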